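/- In the free group F on generators a₁, b₁, c₁, c₂, c₃, every word read along a proper (nonempty, not the whole circuit) cyclic subpath of the boundary word a₂b₁b₂a₂⁻¹a₁⁻¹b₂⁻¹c₁c₂c₃ — interpreted in the group G = ℤ² * F₄ via the isomorphism of the paper — represents a nontrivial element of G. In particular, each proper cyclic subword of the relator a₁⁻¹b₁c₁c₂c₃ represents a nontrivial element of ℤ² * F₄. -/

import Mathlib

namespace Stmt13Aux

def myrels : Set (FreeGroup (Fin 7)) :=
  {FreeGroup.of 1 * FreeGroup.of 2 * FreeGroup.of 3 * (FreeGroup.of 1)⁻¹ *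
      (FreeGroup.of 0)⁻¹ * (FreeGroup.of 3)⁻¹ * FreeGroup.of 4 * FreeGroup.of 5 *
      FreeGroup.of 6,
    (FreeGroup.of 0)⁻¹ * FreeGroup.of 2 * FreeGroup.of 4 * FreeGroup.of 5 *
      FreeGroup.of 6}

def f6 : Fin 7 → Multiplicative (Fin 6 → ℤ) :=
  ![Multiplicative.ofAdd ![0, 1, 0, 1, 1, 1],
    Multiplicative.ofAdd ![1, 0, 0, 0, 0, 0],
    Multiplicative.ofAdd ![0, 1, 0, 0, 0, 0],
    Multiplicative.ofAdd ![0, 0, 1, 0, 0, 0],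
    Multiplicative.ofAdd ![0, 0, 0, 1, 0, 0],
    Multiplicative.ofAdd ![0, 0, 0, 0, 1, 0],
    Multiplicative.ofAdd ![0, 0, 0, 0, 0, 1]]

lemma hrels : ∀ r ∈ myrels, FreeGroup.lift f6 r = 1 := by
  intro r hr
  rcases hr with h | h <;> subst h <;>
    simp only [map_mul, map_inv, FreeGroup.lift_apply_of] <;> decide

def φ : PresentedGroup myrels →* Multiplicative (Fin 6 → ℤ) :=
  PresentedGroup.toGroup hrels

def V₁ : List (Multiplicative (Fin 6 → ℤ)) :=
  [f6 1, f6 2, f6 3, (f6 1)⁻¹, (f6 0)⁻¹, (f6 3)⁻¹, f6 4, f6 5, f6 6]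

def V₂ : List (Multiplicative (Fin 6 → ℤ)) :=
  [(f6 0)⁻¹, f6 2, f6 4, f6 5, f6 6]

lemma D1 : ∀ i < 9, ∀ k, 1 ≤ k → k < 9 → ((V₁.rotate i).take k).prod ≠ 1 := by decide

lemma D2 : ∀ i < 5, ∀ k, 1 ≤ k → k < 5 → ((V₂.rotate i).take k).prod ≠ 1 := by decide

end Stmt13Aux

/-- Every proper (nonempty, not the whole circuit) cyclic subword of either relator of
⟨a₁,a₂,b₁,b₂,c₁,c₂,c₃ | a₂b₁b₂a₂⁻¹a₁⁻¹b₂⁻¹c₁c₂c₃, a₁⁻¹b₁c₁c₂c₃⟩ represents a nontrivial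
element of the presented group (≅ ℤ² * F₄).
Generators: 0 ↦ a₁, 1 ↦ a₂, 2 ↦ b₁, 3 ↦ b₂, 4 ↦ c₁, 5 ↦ c₂, 6 ↦ c₃. -/
theorem stmt_13 :
    let rels : Set (FreeGroup (Fin 7)) :=
      {FreeGroup.of 1 * FreeGroup.of 2 * FreeGroup.of 3 * (FreeGroup.of 1)⁻¹ *
          (FreeGroup.of 0)⁻¹ * (FreeGroup.of 3)⁻¹ * FreeGroup.of 4 * FreeGroup.of 5 *
          FreeGroup.of 6,
        (FreeGroup.of 0)⁻¹ * FreeGroup.of 2 * FreeGroup.of 4 * FreeGroup.of 5 *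
          FreeGroup.of 6}
    let G := PresentedGroup rels
    let of : Fin 7 → G := PresentedGroup.of
    let w₁ : List G :=
      [of 1, of 2, of 3, (of 1)⁻¹, (of 0)⁻¹, (of 3)⁻¹, of 4, of 5, of 6]
    let w₂ : List G := [(of 0)⁻¹, of 2, of 4, of 5, of 6]
    (∀ i k : ℕ, 1 ≤ k → k < 9 → ((w₁.rotate i).take k).prod ≠ 1) ∧
      (∀ i k : ℕ, 1 ≤ k → k < 5 → ((w₂.rotate i).take k).prod ≠ 1) := by
  intro rels G of w₁ w₂
  open Stmt13Aux in
  have hmap1 : w₁.map φ = V₁ := by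
    have hof : ∀ x, φ (of x) = f6 x := fun x => PresentedGroup.toGroup.of hrels
    have hofi : ∀ x, φ (of x)⁻¹ = (f6 x)⁻¹ := fun x => (map_inv φ (of x)).trans (congrArg _ (hof x))
    show [φ (of 1), φ (of 2), φ (of 3), φ (of 1)⁻¹, φ (of 0)⁻¹, φ (of 3)⁻¹, φ (of 4), φ (of 5), φ (of 6)] = V₁
    simp only [hof, hofi, V₁]
  have hmap2 : w₂.map φ = V₂ := by
    have hof : ∀ x, φ (of x) = f6 x := fun x => PresentedGroup.toGroup.of hrels
    have hofi : ∀ x, φ (of x)⁻¹ = (f6 x)⁻¹ := fun x => (map_inv φ (of x)).trans (congrArg _ (hof x))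
    show [φ (of 0)⁻¹, φ (of 2), φ (of 4), φ (of 5), φ (of 6)] = V₂
    simp only [hof, hofi, V₂]
  constructor
  · intro i k hk1 hk9 h
    have h1 : φ (((w₁.rotate i).take k).prod) = 1 := by rw [h]; exact map_one φ
    replace h1 := (map_list_prod φ ((w₁.rotate i).take k)).symm.trans h1
    rw [List.map_take, List.map_rotate] at h1
    have h2 : ((V₁.rotate i).take k).prod = 1 := by rw [← hmap1]; exact h1
    rw [← List.rotate_mod] at h2
    exact D1 (i % 9) (Nat.mod_lt _ (by norm_num)) k hk1 hk9 (by simpa [V₁] using h2)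
  · intro i k hk1 hk5 h
    have h1 : φ (((w₂.rotate i).take k).prod) = 1 := by rw [h]; exact map_one φ
    replace h1 := (map_list_prod φ ((w₂.rotate i).take k)).symm.trans h1
    rw [List.map_take, List.map_rotate] at h1
    have h2 : ((V₂.rotate i).take k).prod = 1 := by rw [← hmap2]; exact h1
    rw [← List.rotate_mod] at h2
    exact D2 (i % 5) (Nat.mod_lt _ (by norm_num)) k hk1 hk5 (by simpa [V₂] using h2)
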